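/- Let ℏ, z ∈ ℂ with ℏ ≠ 0, and set u := (z + ℏ/2)/(2ℏ). Assume that neither u nor u + 1/2 is a nonpositive integer (i.e. of the form −m with m ∈ ℕ). Then G(z) · G(z+ℏ) = 1/(z + ℏ/2); equivalently, G(z)⁻¹ · G(z+ℏ)⁻¹ = z + ℏ/2. -/

import Mathlib

open Complex

/-- The normalizing factor `G(z)` relating the 't Hooft line to Baxter's Q-operator,
built from the complex Gamma function and a principal-branch complex power.
(Here the dependence on ℏ is made explicit.) -/
noncomputable def Gnorm (ℏ z : ℂ) : ℂ :=
  (2*ℏ) ^ (-(1/2 : ℂ)) * Complex.Gamma ((z + ℏ/2) / (2*ℏ)) /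
    Complex.Gamma ((z + 3*ℏ/2) / (2*ℏ))

/-- the difference equation `G(z) G(z+ℏ) = 1/(z + ℏ/2)`, equivalently
`G(z)⁻¹ G(z+ℏ)⁻¹ = z + ℏ/2`. -/
theorem Gnorm_difference_equation (ℏ z : ℂ) (hℏ : ℏ ≠ 0)
    (u : ℂ) (hu : u = (z + ℏ/2) / (2*ℏ))
    (h1 : ∀ m : ℕ, u ≠ -(m : ℂ)) (h2 : ∀ m : ℕ, u + 1/2 ≠ -(m : ℂ)) :
    Gnorm ℏ z * Gnorm ℏ (z + ℏ) = 1 / (z + ℏ/2) ∧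
    (Gnorm ℏ z)⁻¹ * (Gnorm ℏ (z + ℏ))⁻¹ = z + ℏ/2 := by
  have h2ℏ : (2*ℏ) ≠ 0 := by simp [hℏ]
  have hu0 : u ≠ 0 := by simpa using h1 0
  have hz : z + ℏ/2 = 2*ℏ*u := by rw [hu]; field_simp
  have hz0 : z + ℏ/2 ≠ 0 := by rw [hz]; exact mul_ne_zero h2ℏ hu0
  have e0 : (z + ℏ/2) / (2*ℏ) = u := hu.symm
  have e1 : (z + 3*ℏ/2) / (2*ℏ) = u + 1/2 := by rw [hu]; field_simp; ring
  have e2 : (z + ℏ + ℏ/2) / (2*ℏ) = u + 1/2 := by rw [hu]; field_simp; ring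
  have e3 : (z + ℏ + 3*ℏ/2) / (2*ℏ) = u + 1 := by rw [hu]; field_simp; ring
  have hΓu : Complex.Gamma u ≠ 0 := Complex.Gamma_ne_zero h1
  have hΓh : Complex.Gamma (u+1/2) ≠ 0 := Complex.Gamma_ne_zero h2
  have hΓ1 : Complex.Gamma (u+1) = u * Complex.Gamma u := Complex.Gamma_add_one u hu0
  have hA : (2*ℏ) ^ (-(1/2:ℂ)) * (2*ℏ) ^ (-(1/2:ℂ)) = (2*ℏ)⁻¹ := by
    rw [← Complex.cpow_add _ _ h2ℏ]
    have : (-(1/2:ℂ)) + (-(1/2)) = -1 := by norm_num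
    rw [this, Complex.cpow_neg_one]
  have key : Gnorm ℏ z * Gnorm ℏ (z + ℏ) = 1 / (z + ℏ/2) := by
    unfold Gnorm
    rw [e0, e1, e2, e3, hΓ1, hz, div_mul_div_comm, mul_mul_mul_comm, hA,
      div_eq_div_iff (mul_ne_zero hΓh (mul_ne_zero hu0 hΓu)) (mul_ne_zero h2ℏ hu0)]
    field_simp
  refine ⟨key, ?_⟩
  rw [← mul_inv, key, one_div, inv_inv]
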